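/- Let F ⊣ G be an adjunction of linear functors between linearly distributive categories, i.e., an adjunction in the 2-category of LDCs, linear functors, and linear transformations, so that (η⊗, ε⊗) : F⊗ ⊣ G⊗ is a monoidal adjunction and (ε⊕, η⊕) : G⊕ ⊣ F⊕ is a comonoidal adjunction. Then F⊗ is strong monoidal with respect to ⊗ (its laxors m⊗, m⊤ are isomorphisms) and F⊕ is strong comonoidal with respect to ⊕ (its colaxors n⊕, n⊥ are isomorphisms), so F is a strong linear functor. -/

import Mathlib

open CategoryTheory

universe v u v₂ u₂ v₃ u₃

/-- A linearly distributive category (LDC): a category with two monoidal structures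
`T = (⊗, ⊤)` (tensor) and `P = (⊕, ⊥)` (par), linked by natural linear distributors
`∂L : A ⊗ (B ⊕ X) ⟶ (A ⊗ B) ⊕ X` and `∂R : (A ⊕ B) ⊗ X ⟶ A ⊕ (B ⊗ X)`
(satisfying the Cockett–Seely coherence conditions). -/
structure LDC (C : Type u) [Category.{v} C] where
  T : MonoidalCategory C
  P : MonoidalCategory C
  distL : ∀ A B X : C, T.tensorObj A (P.tensorObj B X) ⟶ P.tensorObj (T.tensorObj A B) X
  distR : ∀ A B X : C, T.tensorObj (P.tensorObj A B) X ⟶ P.tensorObj A (T.tensorObj B X)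
  distL_natural : ∀ {A A' B B' X X' : C} (f : A ⟶ A') (g : B ⟶ B') (h : X ⟶ X'),
    T.tensorHom f (P.tensorHom g h) ≫ distL A' B' X'
      = distL A B X ≫ P.tensorHom (T.tensorHom f g) h
  distR_natural : ∀ {A A' B B' X X' : C} (f : A ⟶ A') (g : B ⟶ B') (h : X ⟶ X'),
    T.tensorHom (P.tensorHom f g) h ≫ distR A' B' X'
      = distR A B X ≫ P.tensorHom f (T.tensorHom g h)

namespace LDC

variable {C : Type u} [Category.{v} C]

/-- tensor on objects -/
abbrev ot (L : LDC C) (A B : C) : C := L.T.tensorObj A B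
/-- par on objects -/
abbrev op (L : LDC C) (A B : C) : C := L.P.tensorObj A B
/-- tensor unit ⊤ -/
abbrev tu (L : LDC C) : C := L.T.tensorUnit
/-- par unit ⊥ -/
abbrev pu (L : LDC C) : C := L.P.tensorUnit
/-- tensor on morphisms -/
abbrev oth (L : LDC C) {A B A' B' : C} (f : A ⟶ A') (g : B ⟶ B') :
    L.ot A B ⟶ L.ot A' B' := L.T.tensorHom f g
/-- par on morphisms -/
abbrev oph (L : LDC C) {A B A' B' : C} (f : A ⟶ A') (g : B ⟶ B') :
    L.op A B ⟶ L.op A' B' := L.P.tensorHom f g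
/-- associator of the tensor -/
abbrev aT (L : LDC C) (A B X : C) : L.ot (L.ot A B) X ≅ L.ot A (L.ot B X) := L.T.associator A B X
/-- associator of the par -/
abbrev aP (L : LDC C) (A B X : C) : L.op (L.op A B) X ≅ L.op A (L.op B X) := L.P.associator A B X
/-- left unitor of the tensor -/
abbrev luT (L : LDC C) (A : C) : L.ot L.tu A ≅ A := L.T.leftUnitor A
/-- right unitor of the tensor -/
abbrev ruT (L : LDC C) (A : C) : L.ot A L.tu ≅ A := L.T.rightUnitor A
/-- left unitor of the par -/
abbrev luP (L : LDC C) (A : C) : L.op L.pu A ≅ A := L.P.leftUnitor A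
/-- right unitor of the par -/
abbrev ruP (L : LDC C) (A : C) : L.op A L.pu ≅ A := L.P.rightUnitor A

end LDC

section LinearFunctor

variable {C : Type u} [Category.{v} C] {D : Type u₂} [Category.{v₂} D]

/-- The data of a linear functor between LDCs: a pair of functors `Ft` (tensor part,
lax `⊗`-monoidal via `mT, mU`) and `Fp` (par part, `⊕`-comonoidal via `nP, nU`), together
with the four linear strengths `vtR, vtL, vpR, vpL`. -/
structure LinearFunctorData (X : LDC C) (Y : LDC D) where
  Ft : C ⥤ D
  Fp : C ⥤ D
  mT : ∀ A B : C, Y.ot (Ft.obj A) (Ft.obj B) ⟶ Ft.obj (X.ot A B)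
  mU : Y.tu ⟶ Ft.obj X.tu
  nP : ∀ A B : C, Fp.obj (X.op A B) ⟶ Y.op (Fp.obj A) (Fp.obj B)
  nU : Fp.obj X.pu ⟶ Y.pu
  vtR : ∀ A B : C, Ft.obj (X.op A B) ⟶ Y.op (Fp.obj A) (Ft.obj B)
  vtL : ∀ A B : C, Ft.obj (X.op A B) ⟶ Y.op (Ft.obj A) (Fp.obj B)
  vpR : ∀ A B : C, Y.ot (Ft.obj A) (Fp.obj B) ⟶ Fp.obj (X.ot A B)
  vpL : ∀ A B : C, Y.ot (Fp.obj A) (Ft.obj B) ⟶ Fp.obj (X.ot A B)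

/-- The coherence laws of a linear functor: naturality of all the structure maps,
lax monoidality of `(Ft, mT, mU)`, comonoidality of `(Fp, nP, nU)`, and the
Cockett–Seely coherences [LF.1]–[LF.5]. -/
structure LinearFunctorLaws {X : LDC C} {Y : LDC D} (F : LinearFunctorData X Y) : Prop where
  mT_natural : ∀ {A A' B B' : C} (f : A ⟶ A') (g : B ⟶ B'),
    Y.oth (F.Ft.map f) (F.Ft.map g) ≫ F.mT A' B' = F.mT A B ≫ F.Ft.map (X.oth f g)
  mT_assoc : ∀ A B Cc : C,
    Y.oth (F.mT A B) (𝟙 (F.Ft.obj Cc)) ≫ F.mT (X.ot A B) Cc ≫ F.Ft.map (X.aT A B Cc).hom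
      = (Y.aT (F.Ft.obj A) (F.Ft.obj B) (F.Ft.obj Cc)).hom
          ≫ Y.oth (𝟙 (F.Ft.obj A)) (F.mT B Cc) ≫ F.mT A (X.ot B Cc)
  mT_lu : ∀ A : C,
    Y.oth F.mU (𝟙 (F.Ft.obj A)) ≫ F.mT X.tu A ≫ F.Ft.map (X.luT A).hom
      = (Y.luT (F.Ft.obj A)).hom
  mT_ru : ∀ A : C,
    Y.oth (𝟙 (F.Ft.obj A)) F.mU ≫ F.mT A X.tu ≫ F.Ft.map (X.ruT A).hom
      = (Y.ruT (F.Ft.obj A)).hom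
  nP_natural : ∀ {A A' B B' : C} (f : A ⟶ A') (g : B ⟶ B'),
    F.Fp.map (X.oph f g) ≫ F.nP A' B' = F.nP A B ≫ Y.oph (F.Fp.map f) (F.Fp.map g)
  nP_assoc : ∀ A B Cc : C,
    F.nP (X.op A B) Cc ≫ Y.oph (F.nP A B) (𝟙 (F.Fp.obj Cc))
        ≫ (Y.aP (F.Fp.obj A) (F.Fp.obj B) (F.Fp.obj Cc)).hom
      = F.Fp.map (X.aP A B Cc).hom ≫ F.nP A (X.op B Cc) ≫ Y.oph (𝟙 (F.Fp.obj A)) (F.nP B Cc)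
  nP_lu : ∀ A : C,
    F.Fp.map (X.luP A).hom
      = F.nP X.pu A ≫ Y.oph F.nU (𝟙 (F.Fp.obj A)) ≫ (Y.luP (F.Fp.obj A)).hom
  nP_ru : ∀ A : C,
    F.Fp.map (X.ruP A).hom
      = F.nP A X.pu ≫ Y.oph (𝟙 (F.Fp.obj A)) F.nU ≫ (Y.ruP (F.Fp.obj A)).hom
  vtR_natural : ∀ {A A' B B' : C} (f : A ⟶ A') (g : B ⟶ B'),
    F.Ft.map (X.oph f g) ≫ F.vtR A' B' = F.vtR A B ≫ Y.oph (F.Fp.map f) (F.Ft.map g)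
  vtL_natural : ∀ {A A' B B' : C} (f : A ⟶ A') (g : B ⟶ B'),
    F.Ft.map (X.oph f g) ≫ F.vtL A' B' = F.vtL A B ≫ Y.oph (F.Ft.map f) (F.Fp.map g)
  vpR_natural : ∀ {A A' B B' : C} (f : A ⟶ A') (g : B ⟶ B'),
    Y.oth (F.Ft.map f) (F.Fp.map g) ≫ F.vpR A' B' = F.vpR A B ≫ F.Fp.map (X.oth f g)
  vpL_natural : ∀ {A A' B B' : C} (f : A ⟶ A') (g : B ⟶ B'),
    Y.oth (F.Fp.map f) (F.Ft.map g) ≫ F.vpL A' B' = F.vpL A B ≫ F.Fp.map (X.oth f g)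
  lf1a : ∀ A : C,
    F.Ft.map (X.luP A).hom
      = F.vtR X.pu A ≫ Y.oph F.nU (𝟙 (F.Ft.obj A)) ≫ (Y.luP (F.Ft.obj A)).hom
  lf1b : ∀ A : C,
    F.Ft.map (X.ruP A).hom
      = F.vtL A X.pu ≫ Y.oph (𝟙 (F.Ft.obj A)) F.nU ≫ (Y.ruP (F.Ft.obj A)).hom
  lf1c : ∀ A : C,
    (Y.luT (F.Fp.obj A)).inv ≫ Y.oth F.mU (𝟙 (F.Fp.obj A)) ≫ F.vpR X.tu A
      = F.Fp.map (X.luT A).inv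
  lf1d : ∀ A : C,
    (Y.ruT (F.Fp.obj A)).inv ≫ Y.oth (𝟙 (F.Fp.obj A)) F.mU ≫ F.vpL A X.tu
      = F.Fp.map (X.ruT A).inv
  lf2a : ∀ A B Cc : C,
    F.Ft.map (X.aP A B Cc).hom ≫ F.vtR A (X.op B Cc) ≫ Y.oph (𝟙 (F.Fp.obj A)) (F.vtR B Cc)
      = F.vtR (X.op A B) Cc ≫ Y.oph (F.nP A B) (𝟙 (F.Ft.obj Cc))
          ≫ (Y.aP (F.Fp.obj A) (F.Fp.obj B) (F.Ft.obj Cc)).hom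
  lf2b : ∀ A B Cc : C,
    F.Ft.map (X.aP A B Cc).hom ≫ F.vtL A (X.op B Cc) ≫ Y.oph (𝟙 (F.Ft.obj A)) (F.nP B Cc)
      = F.vtL (X.op A B) Cc ≫ Y.oph (F.vtL A B) (𝟙 (F.Fp.obj Cc))
          ≫ (Y.aP (F.Ft.obj A) (F.Fp.obj B) (F.Fp.obj Cc)).hom
  lf2c : ∀ A B Cc : C,
    Y.oth (F.mT A B) (𝟙 (F.Fp.obj Cc)) ≫ F.vpR (X.ot A B) Cc ≫ F.Fp.map (X.aT A B Cc).hom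
      = (Y.aT (F.Ft.obj A) (F.Ft.obj B) (F.Fp.obj Cc)).hom
          ≫ Y.oth (𝟙 (F.Ft.obj A)) (F.vpR B Cc) ≫ F.vpR A (X.ot B Cc)
  lf2d : ∀ A B Cc : C,
    Y.oth (F.vpL A B) (𝟙 (F.Ft.obj Cc)) ≫ F.vpL (X.ot A B) Cc ≫ F.Fp.map (X.aT A B Cc).hom
      = (Y.aT (F.Fp.obj A) (F.Ft.obj B) (F.Ft.obj Cc)).hom
          ≫ Y.oth (𝟙 (F.Fp.obj A)) (F.mT B Cc) ≫ F.vpL A (X.ot B Cc)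
  lf3a : ∀ A B Cc : C,
    F.Ft.map (X.aP A B Cc).hom ≫ F.vtR A (X.op B Cc) ≫ Y.oph (𝟙 (F.Fp.obj A)) (F.vtL B Cc)
      = F.vtL (X.op A B) Cc ≫ Y.oph (F.vtR A B) (𝟙 (F.Fp.obj Cc))
          ≫ (Y.aP (F.Fp.obj A) (F.Ft.obj B) (F.Fp.obj Cc)).hom
  lf3b : ∀ A B Cc : C,
    Y.oth (F.vpR A B) (𝟙 (F.Ft.obj Cc)) ≫ F.vpL (X.ot A B) Cc ≫ F.Fp.map (X.aT A B Cc).hom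
      = (Y.aT (F.Ft.obj A) (F.Fp.obj B) (F.Ft.obj Cc)).hom
          ≫ Y.oth (𝟙 (F.Ft.obj A)) (F.vpL B Cc) ≫ F.vpR A (X.ot B Cc)
  lf4a : ∀ A B Cc : C,
    Y.oth (𝟙 (F.Ft.obj A)) (F.vtR B Cc)
        ≫ Y.distL (F.Ft.obj A) (F.Fp.obj B) (F.Ft.obj Cc)
        ≫ Y.oph (F.vpR A B) (𝟙 (F.Ft.obj Cc))
      = F.mT A (X.op B Cc) ≫ F.Ft.map (X.distL A B Cc) ≫ F.vtR (X.ot A B) Cc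
  lf4b : ∀ A B Cc : C,
    Y.oth (F.vtL A B) (𝟙 (F.Ft.obj Cc))
        ≫ Y.distR (F.Ft.obj A) (F.Fp.obj B) (F.Ft.obj Cc)
        ≫ Y.oph (𝟙 (F.Ft.obj A)) (F.vpL B Cc)
      = F.mT (X.op A B) Cc ≫ F.Ft.map (X.distR A B Cc) ≫ F.vtL A (X.ot B Cc)
  lf4c : ∀ A B Cc : C,
    Y.oth (𝟙 (F.Fp.obj A)) (F.vtL B Cc)
        ≫ Y.distL (F.Fp.obj A) (F.Ft.obj B) (F.Fp.obj Cc)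
        ≫ Y.oph (F.vpL A B) (𝟙 (F.Fp.obj Cc))
      = F.vpL A (X.op B Cc) ≫ F.Fp.map (X.distL A B Cc) ≫ F.nP (X.ot A B) Cc
  lf4d : ∀ A B Cc : C,
    Y.oth (F.vtR A B) (𝟙 (F.Fp.obj Cc))
        ≫ Y.distR (F.Fp.obj A) (F.Ft.obj B) (F.Fp.obj Cc)
        ≫ Y.oph (𝟙 (F.Fp.obj A)) (F.vpR B Cc)
      = F.vpR (X.op A B) Cc ≫ F.Fp.map (X.distR A B Cc) ≫ F.nP A (X.ot B Cc)
  lf5a : ∀ A B Cc : C,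
    Y.oth (𝟙 (F.Ft.obj A)) (F.vtL B Cc)
        ≫ Y.distL (F.Ft.obj A) (F.Ft.obj B) (F.Fp.obj Cc)
        ≫ Y.oph (F.mT A B) (𝟙 (F.Fp.obj Cc))
      = F.mT A (X.op B Cc) ≫ F.Ft.map (X.distL A B Cc) ≫ F.vtL (X.ot A B) Cc
  lf5b : ∀ A B Cc : C,
    Y.oth (F.vtR A B) (𝟙 (F.Ft.obj Cc))
        ≫ Y.distR (F.Fp.obj A) (F.Ft.obj B) (F.Ft.obj Cc)
        ≫ Y.oph (𝟙 (F.Fp.obj A)) (F.mT B Cc)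
      = F.mT (X.op A B) Cc ≫ F.Ft.map (X.distR A B Cc) ≫ F.vtR A (X.ot B Cc)
  lf5c : ∀ A B Cc : C,
    Y.oth (𝟙 (F.Ft.obj A)) (F.nP B Cc)
        ≫ Y.distL (F.Ft.obj A) (F.Fp.obj B) (F.Fp.obj Cc)
        ≫ Y.oph (F.vpR A B) (𝟙 (F.Fp.obj Cc))
      = F.vpR A (X.op B Cc) ≫ F.Fp.map (X.distL A B Cc) ≫ F.nP (X.ot A B) Cc
  lf5d : ∀ A B Cc : C,
    Y.oth (F.nP A B) (𝟙 (F.Ft.obj Cc))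
        ≫ Y.distR (F.Fp.obj A) (F.Fp.obj B) (F.Ft.obj Cc)
        ≫ Y.oph (𝟙 (F.Fp.obj A)) (F.vpL B Cc)
      = F.vpL (X.op A B) Cc ≫ F.Fp.map (X.distR A B Cc) ≫ F.nP A (X.ot B Cc)

/-- A linear functor between LDCs. -/
structure LinearFunctor (X : LDC C) (Y : LDC D) extends LinearFunctorData X Y where
  laws : LinearFunctorLaws toLinearFunctorData

end LinearFunctor
/-!
STATEMENT 0: If `F ⊣ G` is an adjunction of linear functors between LDCs (so that
`(η⊗, ε⊗) : F⊗ ⊣ G⊗` is a monoidal adjunction and `(ε⊕, η⊕) : G⊕ ⊣ F⊕` is a comonoidal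
adjunction), then `F⊗` is strong monoidal and `F⊕` is strong comonoidal, i.e. `F` is a
strong linear functor.
-/
theorem adjunction_of_linear_functors_is_strong
    {C : Type u} [Category.{v} C] {D : Type u₂} [Category.{v₂} D]
    {X : LDC C} {Y : LDC D}
    (F : LinearFunctor X Y) (G : LinearFunctor Y X)
    -- the tensor parts form an adjunction `F⊗ ⊣ G⊗` ...
    (adjT : F.Ft ⊣ G.Ft)
    -- ... which is a monoidal adjunction (unit and counit are monoidal transformations)
    (unitT_tensor : ∀ A B : C,
      adjT.unit.app (X.ot A B)
        = X.oth (adjT.unit.app A) (adjT.unit.app B) ≫ G.mT (F.Ft.obj A) (F.Ft.obj B)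
            ≫ G.Ft.map (F.mT A B))
    (unitT_unit : adjT.unit.app X.tu = G.mU ≫ G.Ft.map F.mU)
    (counitT_tensor : ∀ A B : D,
      F.mT (G.Ft.obj A) (G.Ft.obj B) ≫ F.Ft.map (G.mT A B) ≫ adjT.counit.app (Y.ot A B)
        = Y.oth (adjT.counit.app A) (adjT.counit.app B))
    (counitT_unit : F.mU ≫ F.Ft.map G.mU ≫ adjT.counit.app Y.tu = 𝟙 Y.tu)
    -- the par parts form an adjunction `G⊕ ⊣ F⊕` ...
    (adjP : G.Fp ⊣ F.Fp)
    -- ... which is a comonoidal adjunction (unit and counit are comonoidal transformations)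
    (unitP_tensor : ∀ A B : D,
      adjP.unit.app (Y.op A B) ≫ F.Fp.map (G.nP A B) ≫ F.nP (G.Fp.obj A) (G.Fp.obj B)
        = Y.oph (adjP.unit.app A) (adjP.unit.app B))
    (unitP_unit : adjP.unit.app Y.pu ≫ F.Fp.map G.nU ≫ F.nU = 𝟙 Y.pu)
    (counitP_tensor : ∀ A B : C,
      adjP.counit.app (X.op A B)
        = G.Fp.map (F.nP A B) ≫ G.nP (F.Fp.obj A) (F.Fp.obj B)
            ≫ X.oph (adjP.counit.app A) (adjP.counit.app B))
    (counitP_unit : adjP.counit.app X.pu = G.Fp.map F.nU ≫ G.nU) :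
    (∀ A B : C, IsIso (F.mT A B)) ∧ IsIso F.mU ∧
      (∀ A B : C, IsIso (F.nP A B)) ∧ IsIso F.nU := by
  refine ⟨fun A B => ?_, ?_, fun A B => ?_, ?_⟩
  · -- mT is iso
    refine ⟨F.Ft.map (X.oth (adjT.unit.app A) (adjT.unit.app B) ≫ G.mT (F.Ft.obj A) (F.Ft.obj B))
      ≫ adjT.counit.app (Y.ot (F.Ft.obj A) (F.Ft.obj B)), ?_, ?_⟩
    · have nat := F.laws.mT_natural (adjT.unit.app A) (adjT.unit.app B)
      simp only [Functor.comp_obj, Functor.id_obj] at nat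
      calc F.mT A B ≫ F.Ft.map (X.oth (adjT.unit.app A) (adjT.unit.app B)
              ≫ G.mT (F.Ft.obj A) (F.Ft.obj B)) ≫ adjT.counit.app _
          = (Y.oth (F.Ft.map (adjT.unit.app A)) (F.Ft.map (adjT.unit.app B))
              ≫ F.mT (G.Ft.obj (F.Ft.obj A)) (G.Ft.obj (F.Ft.obj B)))
            ≫ F.Ft.map (G.mT (F.Ft.obj A) (F.Ft.obj B)) ≫ adjT.counit.app _ := by
              rw [F.Ft.map_comp]
              rw [← Category.assoc, ← Category.assoc, ← nat]
              simp only [Category.assoc]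
        _ = Y.oth (F.Ft.map (adjT.unit.app A)) (F.Ft.map (adjT.unit.app B))
            ≫ Y.oth (adjT.counit.app (F.Ft.obj A)) (adjT.counit.app (F.Ft.obj B)) := by
              rw [Category.assoc, counitT_tensor]
        _ = 𝟙 _ := by
              rw [Y.T.tensorHom_comp_tensorHom]
              erw [adjT.left_triangle_components, adjT.left_triangle_components]
              exact Y.T.id_tensorHom_id _ _
    · have h := adjT.counit.naturality (F.mT A B)
      simp only [Functor.comp_map, Functor.id_map] at h
      calc (F.Ft.map (X.oth (adjT.unit.app A) (adjT.unit.app B)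
              ≫ G.mT (F.Ft.obj A) (F.Ft.obj B)) ≫ adjT.counit.app _) ≫ F.mT A B
          = F.Ft.map (X.oth (adjT.unit.app A) (adjT.unit.app B)
              ≫ G.mT (F.Ft.obj A) (F.Ft.obj B) ≫ G.Ft.map (F.mT A B))
            ≫ adjT.counit.app (F.Ft.obj (X.ot A B)) := by
              rw [F.Ft.map_comp, F.Ft.map_comp, F.Ft.map_comp]
              simp only [Category.assoc]
              rw [← h]
        _ = F.Ft.map (adjT.unit.app (X.ot A B)) ≫ adjT.counit.app _ := by
              rw [← unitT_tensor]
        _ = 𝟙 _ := adjT.left_triangle_components _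
  · -- mU is iso
    refine ⟨F.Ft.map G.mU ≫ adjT.counit.app Y.tu, ?_, ?_⟩
    · rw [← Category.assoc] at counitT_unit ⊢
      exact counitT_unit
    · have h := adjT.counit.naturality F.mU
      simp only [Functor.comp_map, Functor.id_map] at h
      calc (F.Ft.map G.mU ≫ adjT.counit.app Y.tu) ≫ F.mU
          = F.Ft.map (G.mU ≫ G.Ft.map F.mU) ≫ adjT.counit.app (F.Ft.obj X.tu) := by
              rw [F.Ft.map_comp]
              simp only [Category.assoc]
              rw [← h]
        _ = F.Ft.map (adjT.unit.app X.tu) ≫ adjT.counit.app _ := by rw [← unitT_unit]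
        _ = 𝟙 _ := adjT.left_triangle_components _
  · -- nP is iso
    refine ⟨adjP.unit.app (Y.op (F.Fp.obj A) (F.Fp.obj B))
      ≫ F.Fp.map (G.nP (F.Fp.obj A) (F.Fp.obj B)
        ≫ X.oph (adjP.counit.app A) (adjP.counit.app B)), ?_, ?_⟩
    · have h := adjP.unit.naturality (F.nP A B)
      simp only [Functor.comp_map, Functor.id_map] at h
      calc F.nP A B ≫ adjP.unit.app _ ≫ F.Fp.map (G.nP (F.Fp.obj A) (F.Fp.obj B)
              ≫ X.oph (adjP.counit.app A) (adjP.counit.app B))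
          = adjP.unit.app (F.Fp.obj (X.op A B))
            ≫ F.Fp.map (G.Fp.map (F.nP A B) ≫ G.nP (F.Fp.obj A) (F.Fp.obj B)
              ≫ X.oph (adjP.counit.app A) (adjP.counit.app B)) := by
              rw [F.Fp.map_comp, F.Fp.map_comp, F.Fp.map_comp, ← Category.assoc, h]
              simp only [Category.assoc]
        _ = adjP.unit.app _ ≫ F.Fp.map (adjP.counit.app (X.op A B)) := by
              rw [← counitP_tensor]
        _ = 𝟙 _ := adjP.right_triangle_components _
    · have nat := F.laws.nP_natural (adjP.counit.app A) (adjP.counit.app B)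
      simp only [Functor.comp_obj, Functor.id_obj] at nat
      calc (adjP.unit.app (Y.op (F.Fp.obj A) (F.Fp.obj B))
              ≫ F.Fp.map (G.nP (F.Fp.obj A) (F.Fp.obj B)
                ≫ X.oph (adjP.counit.app A) (adjP.counit.app B))) ≫ F.nP A B
          = adjP.unit.app _ ≫ F.Fp.map (G.nP (F.Fp.obj A) (F.Fp.obj B))
            ≫ F.nP (G.Fp.obj (F.Fp.obj A)) (G.Fp.obj (F.Fp.obj B))
            ≫ Y.oph (F.Fp.map (adjP.counit.app A)) (F.Fp.map (adjP.counit.app B)) := by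
              rw [F.Fp.map_comp]
              simp only [Category.assoc]
              rw [nat]
        _ = Y.oph (adjP.unit.app (F.Fp.obj A)) (adjP.unit.app (F.Fp.obj B))
            ≫ Y.oph (F.Fp.map (adjP.counit.app A)) (F.Fp.map (adjP.counit.app B)) := by
              rw [← Category.assoc, ← Category.assoc, Category.assoc (adjP.unit.app _),
                unitP_tensor]
        _ = 𝟙 _ := by
              rw [Y.P.tensorHom_comp_tensorHom, adjP.right_triangle_components,
                adjP.right_triangle_components]
              exact Y.P.id_tensorHom_id _ _
  · -- nU is iso
    refine ⟨adjP.unit.app Y.pu ≫ F.Fp.map G.nU, ?_, ?_⟩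
    · have h := adjP.unit.naturality F.nU
      simp only [Functor.comp_map, Functor.id_map] at h
      calc F.nU ≫ adjP.unit.app Y.pu ≫ F.Fp.map G.nU
          = adjP.unit.app (F.Fp.obj X.pu) ≫ F.Fp.map (G.Fp.map F.nU ≫ G.nU) := by
              rw [F.Fp.map_comp, ← Category.assoc, h, Category.assoc]
        _ = adjP.unit.app _ ≫ F.Fp.map (adjP.counit.app X.pu) := by rw [← counitP_unit]
        _ = 𝟙 _ := adjP.right_triangle_components _
    · rw [Category.assoc]
      exact unitP_unit
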